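/- Let I and P be posets and F a map assigning to each x ∈ I a downset F(x) ⊆ P, with F(x) ⊆ F(y) whenever x ≤ y. Let Q := ∪_{x∈I} F(x), regarded as a full subposet of P, let S := {(x,q) ∈ I × P | q ∈ F(x)} with the componentwise order, and let π : S → Q be the projection (x,q) ↦ q. If for every q ∈ Q the subposet I_q := {x ∈ I | q ∈ F(x)} of I is connected, then π is a final functor; that is, for every q ∈ Q the comma poset {(x,p) ∈ S | q ≤ p} is nonempty and connected. -/
import Mathlib


open CategoryTheory

universe w

namespace HeightInterleaving

/-- The projection `π : S ⥤ Q` from the poset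
`S = {(x, q) ∈ I × P ∣ q ∈ F(x)}` (with the componentwise order) to
`Q = ⋃_{x ∈ I} F(x)`, given by `(x, q) ↦ q`. -/
def grothendieckProj {I P : Type w} [PartialOrder I] [PartialOrder P] (F : I → Set P) :
    {xq : I × P // xq.2 ∈ F xq.1} ⥤ ↥(⋃ x : I, F x) :=
  Monotone.functor
    (f := fun s => ⟨s.1.2, Set.mem_iUnion.2 ⟨s.1.1, s.2⟩⟩)
    (fun _ _ h => h.2)

/-- Let `F` assign to each `x ∈ I` a downset `F(x) ⊆ P`, monotonely in
`x`. If for every `q ∈ Q := ⋃_x F(x)` the subposet `I_q = {x ∈ I ∣ q ∈ F(x)}` is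
connected, then the projection `π : S ⥤ Q`, `(x, q) ↦ q`, is a final functor (i.e. every
comma poset `(q ↓ π)` is nonempty and connected). -/
theorem statement_11 {I P : Type w} [PartialOrder I] [PartialOrder P] (F : I → Set P)
    (hdownset : ∀ x : I, ∀ ⦃y z : P⦄, y ≤ z → z ∈ F x → y ∈ F x)
    (hmono : ∀ ⦃x y : I⦄, x ≤ y → F x ⊆ F y)
    (hconn : ∀ q ∈ ⋃ x : I, F x, IsConnected ↥{x : I | q ∈ F x}) :
    Functor.Final (grothendieckProj F) := by
  constructor
  intro q
  obtain ⟨x₀, hx₀⟩ := Set.mem_iUnion.1 q.2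
  -- the functor from `I_q` into the comma category, `x ↦ ((x, q), id)`
  let h : ↥{x : I | (q : P) ∈ F x} ⥤ StructuredArrow q (grothendieckProj F) :=
    { obj := fun x => StructuredArrow.mk
        (Y := (⟨(x.1, (q : P)), x.2⟩ : {xq : I × P // xq.2 ∈ F xq.1}))
        (homOfLE le_rfl)
      map := fun {x y} f => StructuredArrow.homMk
        (homOfLE (show ((x.1, (q : P)) : I × P) ≤ (y.1, (q : P)) from ⟨leOfHom f, le_rfl⟩))
        (Subsingleton.elim _ _)
      map_id := fun _ => by apply StructuredArrow.hom_ext; apply Subsingleton.elim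
      map_comp := fun _ _ => by apply StructuredArrow.hom_ext; apply Subsingleton.elim }
  -- for an object `j = ((x, p), q ≤ p)` of the comma category, the membership `q ∈ F x`
  have hmem : ∀ j : StructuredArrow q (grothendieckProj F), (q : P) ∈ F j.right.1.1 :=
    fun j => hdownset _ (leOfHom j.hom) j.right.2
  -- each object of the comma category receives a map from an object in the image of `h`
  have key : ∀ j : StructuredArrow q (grothendieckProj F),
      Zigzag (h.obj ⟨j.right.1.1, hmem j⟩) j := by
    intro j
    refine Relation.ReflTransGen.single (Or.inl ⟨?_⟩)
    exact StructuredArrow.homMk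
      (homOfLE (show ((j.right.1.1, (q : P)) : I × P) ≤ j.right.1
        from ⟨le_rfl, leOfHom j.hom⟩))
      (Subsingleton.elim _ _)
  haveI : Nonempty (StructuredArrow q (grothendieckProj F)) := ⟨h.obj ⟨x₀, hx₀⟩⟩
  haveI := hconn (q : P) q.2
  apply zigzag_isConnected
  intro j₁ j₂
  have hz : Zigzag (⟨j₁.right.1.1, hmem j₁⟩ : ↥{x : I | (q : P) ∈ F x})
      ⟨j₂.right.1.1, hmem j₂⟩ := isPreconnected_zigzag _ _
  exact ((key j₁).symm.trans (zigzag_obj_of_zigzag h hz)).trans (key j₂)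

end HeightInterleaving
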